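/- Let λ, d, β, a, p1, p2, c1, c2, b1, b2, q, h be positive real numbers, let A := c2·(λ − d·q) − b2·β, and assume A > 0 and D := A² − 4·β·c2·q·d·b2 ≥ 0. Set x2 := (A − √D)/(2·β·c2·q), x1 := λ/(d + β·x2), and x5 := (x2·c2·(β·q − a) + b2·β)/(c2·p2·x2). Then β·x1 − a − p2·x5 = 0; that is, the defined value of x5 equals (β·x1 − a)/p2. -/

import Mathlib

/-- At the recovery steady state, `β·x1 − a − p2·x5 = 0`; that is, the defined
value of `x5` equals `(β·x1 − a)/p2`. -/
theorem hiv_second_equation_steady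
    (lam d β a p1 p2 c1 c2 b1 b2 q h : ℝ)
    (hlam : 0 < lam) (hd : 0 < d) (hβ : 0 < β) (ha : 0 < a)
    (hp1 : 0 < p1) (hp2 : 0 < p2) (hc1 : 0 < c1) (hc2 : 0 < c2)
    (hb1 : 0 < b1) (hb2 : 0 < b2) (hq : 0 < q) (hh : 0 < h)
    (A D x1 x2 x5 : ℝ)
    (hA : A = c2 * (lam - d * q) - b2 * β)
    (hApos : 0 < A)
    (hD : D = A ^ 2 - 4 * β * c2 * q * d * b2)
    (hDnonneg : 0 ≤ D)
    (hx2 : x2 = (A - Real.sqrt D) / (2 * β * c2 * q))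
    (hx1 : x1 = lam / (d + β * x2))
    (hx5 : x5 = (x2 * c2 * (β * q - a) + b2 * β) / (c2 * p2 * x2)) :
    β * x1 - a - p2 * x5 = 0 ∧ x5 = (β * x1 - a) / p2 := by
  set s := Real.sqrt D with hs
  have hs2 : s ^ 2 = D := Real.sq_sqrt hDnonneg
  have hDltA2 : D < A ^ 2 := by
    rw [hD]; nlinarith [mul_pos (mul_pos (mul_pos hβ hc2) hq) (mul_pos hd hb2)]
  have hsltA : s < A := by
    have := Real.sqrt_lt_sqrt hDnonneg hDltA2
    rwa [Real.sqrt_sq hApos.le] at this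
  have hden : 0 < 2 * β * c2 * q := by positivity
  have hx2pos : 0 < x2 := by
    rw [hx2]; exact div_pos (by linarith) hden
  -- quadratic identity
  have hquad : β * c2 * q * x2 ^ 2 - A * x2 + d * b2 = 0 := by
    have h2 : 2 * β * c2 * q * x2 = A - s := by
      rw [hx2]; field_simp
    nlinarith [h2, hs2, hD]
  have hd1 : d + β * x2 ≠ 0 := by positivity
  have hx2ne : x2 ≠ 0 := ne_of_gt hx2pos
  have key : β * x1 - a - p2 * x5 = 0 := by
    rw [hx1, hx5]
    field_simp
    rw [hA] at hquad
    linear_combination (-β) * hquad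
  refine ⟨key, ?_⟩
  field_simp
  linarith [key]
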